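/- Let 𝔰 = (s_1,…,s_r) be a tuple of positive integers and u = (u_1,…,u_r) ∈ F^r with |u_1| < q^{s_1·q/(q−1)} and |u_k| ≤ q^{s_k·q/(q−1)} for 2 ≤ k ≤ r. For each tuple of integers i_1 ≥ ⋯ ≥ i_r ≥ 0, the element T_{(i_1,…,i_r)} := u_1^{q^{i_1}}⋯u_r^{q^{i_r}}·(𝕃_{i_1}^{s_1}⋯𝕃_{i_r}^{s_r})^{−1} ∈ F[[t]] has finite Gauss norm; moreover for every ε > 0 only finitely many tuples i_1 ≥ ⋯ ≥ i_r ≥ 0 satisfy ‖T_{(i_1,…,i_r)}‖_θ ≥ ε (that is, ‖T_{(i_1,…,i_r)}‖_θ → 0 as i_1 → ∞), and consequently (if F is complete) the family (T_{(i_1,…,i_r)}) is summable in F[[t]] for the product topology, its sum being 𝔏i⋆_{𝔰,u}. (This is the convergence claim of Section 3.1 of the paper: 𝔏i⋆_{𝔰,u} lies in the Tate algebra 𝕋_θ.) -/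

import Mathlib

open PowerSeries Filter Topology
open scoped ENNReal NNReal

noncomputable section

/-- The product (coefficientwise) topology on `PowerSeries F`. -/
instance psTop {F : Type*} [Semiring F] [TopologicalSpace F] :
    TopologicalSpace (PowerSeries F) :=
  TopologicalSpace.induced (fun φ (n : ℕ) => PowerSeries.coeff (R := F) n φ) inferInstance

variable {F : Type*} [Field F]

/-- `𝕃_i = (t-θ^q)⋯(t-θ^{q^i})` as a formal power series. -/
def LL (q : ℕ) (θ : F) (i : ℕ) : PowerSeries F :=
  ∏ m ∈ Finset.range i, (PowerSeries.X - PowerSeries.C (R := F) (θ ^ q ^ (m + 1)))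

/-- General term `u_1^{q^{i_1}}⋯u_r^{q^{i_r}}·(𝕃_{i_1}^{s_1}⋯𝕃_{i_r}^{s_r})⁻¹` of a
t-motivic Carlitz multiple (star) polylogarithm. -/
def polyLogTerm (q : ℕ) (θ : F) {r : ℕ} (s : Fin r → ℕ) (u : Fin r → F)
    (i : Fin r → ℕ) : PowerSeries F :=
  ∏ k, PowerSeries.C (R := F) (u k ^ q ^ i k) * (LL q θ (i k) ^ s k)⁻¹

/-- Gauss norm `‖f‖_θ = sup_m |c_m|·q^m ∈ [0,∞]` on `F[[t]]`. -/
def gaussNorm {F : Type*} [NormedField F] (q : ℕ) (f : PowerSeries F) : ℝ≥0∞ :=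
  ⨆ m : ℕ, (‖PowerSeries.coeff (R := F) m f‖₊ : ℝ≥0∞) * (q : ℝ≥0∞) ^ m

/-! ### Auxiliary lemmas -/

section Aux

variable {K : Type*} [NormedField K] [IsUltrametricDist K] (q : ℕ)

lemma coeff_le_gaussNorm (f : PowerSeries K) (m : ℕ) :
    (‖PowerSeries.coeff (R := K) m f‖₊ : ℝ≥0∞) * (q : ℝ≥0∞) ^ m ≤ gaussNorm q f :=
  le_iSup (fun m => (‖PowerSeries.coeff (R := K) m f‖₊ : ℝ≥0∞) * (q : ℝ≥0∞) ^ m) m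

lemma gaussNorm_C_le (a : K) : gaussNorm q (PowerSeries.C (R := K) a) ≤ (‖a‖₊ : ℝ≥0∞) := by
  refine iSup_le fun m => ?_
  cases m with
  | zero => simp
  | succ n => simp [PowerSeries.coeff_C]

lemma gaussNorm_one_le : gaussNorm q (1 : PowerSeries K) ≤ 1 := by
  refine iSup_le fun m => ?_
  cases m with
  | zero => simp
  | succ n => simp [PowerSeries.coeff_one]

lemma gaussNorm_mul_le (f g : PowerSeries K) :
    gaussNorm q (f * g) ≤ gaussNorm q f * gaussNorm q g := by
  refine iSup_le fun m => ?_
  rw [PowerSeries.coeff_mul]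
  obtain ⟨p, hp, hsup⟩ := Finset.exists_mem_eq_sup (Finset.HasAntidiagonal.antidiagonal m)
    ⟨(0, m), by simp⟩ (fun p => ‖PowerSeries.coeff (R := K) p.1 f * PowerSeries.coeff (R := K) p.2 g‖₊)
  have h1 : ‖∑ p ∈ Finset.HasAntidiagonal.antidiagonal m,
      PowerSeries.coeff (R := K) p.1 f * PowerSeries.coeff (R := K) p.2 g‖₊
      ≤ ‖PowerSeries.coeff (R := K) p.1 f * PowerSeries.coeff (R := K) p.2 g‖₊ :=
    (Finset.nnnorm_sum_le_sup_nnnorm _ _).trans hsup.le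
  calc (‖∑ p ∈ Finset.HasAntidiagonal.antidiagonal m,
        PowerSeries.coeff (R := K) p.1 f * PowerSeries.coeff (R := K) p.2 g‖₊ : ℝ≥0∞) * (q : ℝ≥0∞) ^ m
      ≤ (‖PowerSeries.coeff (R := K) p.1 f * PowerSeries.coeff (R := K) p.2 g‖₊ : ℝ≥0∞)
          * (q : ℝ≥0∞) ^ m := mul_le_mul' (by exact_mod_cast h1) le_rfl
    _ = ((‖PowerSeries.coeff (R := K) p.1 f‖₊ : ℝ≥0∞) * (q : ℝ≥0∞) ^ p.1)
          * ((‖PowerSeries.coeff (R := K) p.2 g‖₊ : ℝ≥0∞) * (q : ℝ≥0∞) ^ p.2) := by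
        obtain ⟨a, b⟩ := p
        obtain rfl : a + b = m := Finset.HasAntidiagonal.mem_antidiagonal.mp hp
        rw [nnnorm_mul, pow_add]
        push_cast
        ring
    _ ≤ gaussNorm q f * gaussNorm q g :=
        mul_le_mul' (coeff_le_gaussNorm q f p.1) (coeff_le_gaussNorm q g p.2)

lemma gaussNorm_prod_le {ι : Type*} (t : Finset ι) (f : ι → PowerSeries K) :
    gaussNorm q (∏ k ∈ t, f k) ≤ ∏ k ∈ t, gaussNorm q (f k) := by
  classical
  induction t using Finset.induction with
  | empty => simpa using gaussNorm_one_le q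
  | insert _ _ h ih =>
      rw [Finset.prod_insert h, Finset.prod_insert h]
      exact (gaussNorm_mul_le q _ _).trans (mul_le_mul' le_rfl ih)

lemma gaussNorm_pow_le (f : PowerSeries K) (n : ℕ) :
    gaussNorm q (f ^ n) ≤ gaussNorm q f ^ n := by
  induction n with
  | zero => simpa using gaussNorm_one_le q
  | succ n ih =>
      rw [pow_succ, pow_succ]
      exact (gaussNorm_mul_le q _ _).trans (mul_le_mul' ih le_rfl)

end Aux

lemma ps_inv_pow {K : Type*} [Field K] (f : PowerSeries K) (n : ℕ) :
    (f ^ n)⁻¹ = (f⁻¹) ^ n := by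
  induction n with
  | zero => simp
  | succ n ih => rw [pow_succ, PowerSeries.mul_inv_rev, ih, pow_succ, mul_comm]

lemma inv_X_sub_C {K : Type*} [Field K] (c : K) (hc : c ≠ 0) :
    (PowerSeries.X - PowerSeries.C (R := K) c)⁻¹
      = PowerSeries.mk fun n => -(c⁻¹ ^ (n + 1)) := by
  have h : PowerSeries.constantCoeff (R := K) (PowerSeries.X - PowerSeries.C (R := K) c) ≠ 0 := by
    simp [hc]
  rw [PowerSeries.inv_eq_iff_mul_eq_one h]
  ext n
  rw [mul_sub, map_sub]
  cases n with
  | zero =>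
      simp [PowerSeries.coeff_zero_mul_X, PowerSeries.coeff_mul_C, hc]
  | succ n =>
      rw [PowerSeries.coeff_succ_mul_X, PowerSeries.coeff_mul_C]
      simp [PowerSeries.coeff_mk, pow_succ, hc, PowerSeries.coeff_one]
      field_simp
      ring

section Aux2

variable {K : Type*} [NormedField K] [IsUltrametricDist K]

lemma gaussNorm_inv_X_sub_C_le (q : ℕ) (hq0 : 0 < q) (c : K)
    (hcq : (q : ℝ≥0) ≤ ‖c‖₊) :
    gaussNorm q ((PowerSeries.X - PowerSeries.C (R := K) c)⁻¹) ≤ ((‖c‖₊⁻¹ : ℝ≥0) : ℝ≥0∞) := by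
  have hc : c ≠ 0 := by
    intro h
    rw [h, nnnorm_zero] at hcq
    exact absurd (le_antisymm hcq (zero_le)) (by exact_mod_cast hq0.ne')
  rw [inv_X_sub_C c hc]
  refine iSup_le fun n => ?_
  rw [PowerSeries.coeff_mk]
  have hnn : ‖-(c⁻¹ ^ (n + 1))‖₊ = ‖c‖₊⁻¹ ^ (n + 1) := by
    rw [nnnorm_neg, nnnorm_pow, nnnorm_inv]
  rw [hnn]
  set a : ℝ≥0∞ := (‖c‖₊ : ℝ≥0∞) with ha
  have ha0 : a ≠ 0 := by simp [ha, hc]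
  have hatop : a ≠ ⊤ := ENNReal.coe_ne_top
  have hqa : (q : ℝ≥0∞) ≤ a := by
    rw [ha]
    exact_mod_cast hcq
  have key : (a⁻¹) ^ (n + 1) * (q : ℝ≥0∞) ^ n ≤ a⁻¹ := by
    have h1 : a⁻¹ * (q : ℝ≥0∞) ≤ 1 := by
      calc a⁻¹ * (q : ℝ≥0∞) ≤ a⁻¹ * a := by gcongr
        _ = 1 := ENNReal.inv_mul_cancel ha0 hatop
    calc (a⁻¹) ^ (n + 1) * (q : ℝ≥0∞) ^ n = a⁻¹ * (a⁻¹ * (q : ℝ≥0∞)) ^ n := by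
          rw [mul_pow, pow_succ]; ring
      _ ≤ a⁻¹ * 1 ^ n := by gcongr
      _ = a⁻¹ := by simp
  calc ((‖c‖₊⁻¹ ^ (n + 1) : ℝ≥0) : ℝ≥0∞) * (q : ℝ≥0∞) ^ n
      = (a⁻¹) ^ (n + 1) * (q : ℝ≥0∞) ^ n := by
        rw [ha, ← ENNReal.coe_inv (by simp [hc]), ENNReal.coe_pow]
    _ ≤ a⁻¹ := key
    _ = ((‖c‖₊⁻¹ : ℝ≥0) : ℝ≥0∞) := by rw [ha, ENNReal.coe_inv (by simp [hc])]

lemma LL_inv (q : ℕ) (θ : K) (i : ℕ) :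
    (LL q θ i)⁻¹
      = ∏ m ∈ Finset.range i, (PowerSeries.X - PowerSeries.C (R := K) (θ ^ q ^ (m + 1)))⁻¹ := by
  induction i with
  | zero => simp [LL]
  | succ i ih =>
      rw [LL, Finset.prod_range_succ, PowerSeries.mul_inv_rev, ← LL, ih,
        Finset.prod_range_succ, mul_comm]

lemma gaussNorm_LL_pow_inv_le (q : ℕ) (hq2 : 2 ≤ q) (θ : K)
    (hθ : ‖θ‖₊ = (q : ℝ≥0)) (i sk : ℕ) :
    gaussNorm q ((LL q θ i ^ sk)⁻¹)
      ≤ (((((q : ℝ≥0) ^ (∑ m ∈ Finset.range i, q ^ (m + 1)))⁻¹ : ℝ≥0)) : ℝ≥0∞) ^ sk := by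
  have hq0 : 0 < q := by omega
  calc gaussNorm q ((LL q θ i ^ sk)⁻¹) = gaussNorm q (((LL q θ i)⁻¹) ^ sk) := by
        rw [ps_inv_pow]
    _ ≤ gaussNorm q ((LL q θ i)⁻¹) ^ sk := gaussNorm_pow_le q _ sk
    _ ≤ (((((q : ℝ≥0) ^ (∑ m ∈ Finset.range i, q ^ (m + 1)))⁻¹ : ℝ≥0)) : ℝ≥0∞) ^ sk := by
        gcongr
        rw [LL_inv]
        calc gaussNorm q (∏ m ∈ Finset.range i,
              (PowerSeries.X - PowerSeries.C (R := K) (θ ^ q ^ (m + 1)))⁻¹)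
            ≤ ∏ m ∈ Finset.range i,
                gaussNorm q ((PowerSeries.X - PowerSeries.C (R := K) (θ ^ q ^ (m + 1)))⁻¹) :=
              gaussNorm_prod_le q _ _
          _ ≤ ∏ m ∈ Finset.range i, (((‖θ ^ q ^ (m + 1)‖₊⁻¹ : ℝ≥0)) : ℝ≥0∞) := by
              refine Finset.prod_le_prod' fun m _ => ?_
              refine gaussNorm_inv_X_sub_C_le q hq0 _ ?_
              rw [nnnorm_pow, hθ]
              calc ((q : ℝ≥0)) = (q : ℝ≥0) ^ 1 := (pow_one _).symm
                _ ≤ (q : ℝ≥0) ^ q ^ (m + 1) := by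
                    apply pow_le_pow_right₀
                    · exact_mod_cast (by omega : 1 ≤ q)
                    · exact Nat.one_le_pow _ _ hq0
          _ = (((((q : ℝ≥0) ^ (∑ m ∈ Finset.range i, q ^ (m + 1)))⁻¹ : ℝ≥0)) : ℝ≥0∞) := by
              rw [← ENNReal.coe_finset_prod]
              congr 1
              rw [Finset.prod_inv_distrib]
              congr 1
              rw [← Finset.prod_pow_eq_pow_sum]
              refine Finset.prod_congr rfl fun m _ => ?_
              rw [nnnorm_pow, hθ]

end Aux2

lemma key_exponent {q : ℕ} (hq2 : 2 ≤ q) (sk i : ℕ) :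
    ((q : ℝ≥0) ^ ((sk : ℝ) * (q : ℝ) / ((q : ℝ) - 1))) ^ (q ^ i)
      = (q : ℝ≥0) ^ ((sk : ℝ) * (q : ℝ) / ((q : ℝ) - 1))
        * ((q : ℝ≥0) ^ (∑ m ∈ Finset.range i, q ^ (m + 1))) ^ sk := by
  have hq0 : (q : ℝ≥0) ≠ 0 := by
    exact_mod_cast (by omega : q ≠ 0)
  set c : ℝ := (sk : ℝ) * (q : ℝ) / ((q : ℝ) - 1) with hc
  rw [← NNReal.rpow_natCast ((q : ℝ≥0) ^ c) (q ^ i), ← NNReal.rpow_mul,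
    ← NNReal.rpow_natCast (q : ℝ≥0) (∑ m ∈ Finset.range i, q ^ (m + 1)),
    ← NNReal.rpow_natCast ((q : ℝ≥0) ^ ((∑ m ∈ Finset.range i, q ^ (m + 1) : ℕ) : ℝ)) sk,
    ← NNReal.rpow_mul, ← NNReal.rpow_add hq0]
  congr 1
  have hq1 : (q : ℝ) ≠ 1 := by
    exact_mod_cast (by omega : q ≠ 1)
  have hq1' : (q : ℝ) - 1 ≠ 0 := by
    intro h
    apply hq1
    linarith
  have hA : ((∑ m ∈ Finset.range i, q ^ (m + 1) : ℕ) : ℝ)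
      = (q : ℝ) * (((q : ℝ) ^ i - 1) / ((q : ℝ) - 1)) := by
    push_cast
    simp_rw [pow_succ']
    rw [← Finset.mul_sum, geom_sum_eq hq1]
  rw [hA, hc]
  push_cast
  field_simp
  ring

/-- convergence claim of Section 3.1 of the paper: `𝔏i⋆_{𝔰,u}` lies in the
Tate algebra `𝕋_θ`.  Each term of the star family has finite Gauss norm, for every `ε > 0`
only finitely many terms have Gauss norm `≥ ε`, and the family is summable in `F[[t]]` for
the product topology (its sum being `𝔏i⋆_{𝔰,u}`). -/
theorem statement8
    {F : Type*} [NormedField F] [IsUltrametricDist F] [CompleteSpace F]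
    (q : ℕ) (hq : IsPrimePow q) (θ : F) (hθ : ‖θ‖ = (q : ℝ))
    {r : ℕ} (hr : 0 < r) (s : Fin r → ℕ) (hs : ∀ k, 0 < s k)
    (u : Fin r → F)
    (h1 : ‖u ⟨0, hr⟩‖ < (q : ℝ) ^ ((s ⟨0, hr⟩ : ℝ) * (q : ℝ) / ((q : ℝ) - 1)))
    (hk : ∀ k : Fin r, k ≠ ⟨0, hr⟩ →
      ‖u k‖ ≤ (q : ℝ) ^ ((s k : ℝ) * (q : ℝ) / ((q : ℝ) - 1))) :
    (∀ i : {i : Fin r → ℕ // Antitone i}, gaussNorm q (polyLogTerm q θ s u i.1) ≠ ⊤)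
    ∧ (∀ ε : ℝ, 0 < ε →
        {i : {i : Fin r → ℕ // Antitone i} |
          ENNReal.ofReal ε ≤ gaussNorm q (polyLogTerm q θ s u i.1)}.Finite)
    ∧ Summable (fun i : {i : Fin r → ℕ // Antitone i} => polyLogTerm q θ s u i.1) := by
  classical
  have hq2 : 2 ≤ q := hq.two_le
  have hq0 : 0 < q := by omega
  have hθn : ‖θ‖₊ = (q : ℝ≥0) := by
    ext
    rw [coe_nnnorm, hθ]
    simp
  set k0 : Fin r := ⟨0, hr⟩ with hk0
  set E : Fin r → ℝ≥0 :=
    fun k => (q : ℝ≥0) ^ ((s k : ℝ) * (q : ℝ) / ((q : ℝ) - 1)) with hE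
  have hE0 : ∀ k, 0 < E k := fun k =>
    NNReal.rpow_pos (by exact_mod_cast hq0)
  set ρ : Fin r → ℝ≥0 := fun k => ‖u k‖₊ / E k with hρ
  have hu : ∀ k, ‖u k‖₊ = ρ k * E k := fun k => by
    rw [hρ]
    exact (div_mul_cancel₀ _ (hE0 k).ne').symm
  have hEc : ∀ k, ((E k : ℝ≥0) : ℝ) = (q : ℝ) ^ ((s k : ℝ) * (q : ℝ) / ((q : ℝ) - 1)) := by
    intro k
    rw [hE]
    rw [NNReal.coe_rpow]
    norm_num
  have hρ0 : ρ k0 < 1 := by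
    rw [hρ]
    rw [div_lt_one (hE0 k0)]
    have : (‖u k0‖₊ : ℝ) < ((E k0 : ℝ≥0) : ℝ) := by
      rw [coe_nnnorm, hEc k0]
      exact h1
    exact_mod_cast this
  have hρk : ∀ k, k ≠ k0 → ρ k ≤ 1 := by
    intro k hkk
    rw [hρ]
    rw [div_le_one (hE0 k)]
    have : (‖u k‖₊ : ℝ) ≤ ((E k : ℝ≥0) : ℝ) := by
      rw [coe_nnnorm, hEc k]
      exact hk k hkk
    exact_mod_cast this
  set B : (Fin r → ℕ) → ℝ≥0 := fun i => ∏ k, ρ k ^ q ^ i k * E k with hB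
  set P : ℝ≥0 := ∏ k, E k with hP
  -- the key per-term bound on the Gauss norm
  have L1 : ∀ i : Fin r → ℕ, gaussNorm q (polyLogTerm q θ s u i) ≤ ((B i : ℝ≥0) : ℝ≥0∞) := by
    intro i
    have hfac : ∀ k : Fin r,
        gaussNorm q (PowerSeries.C (R := F) (u k ^ q ^ i k) * (LL q θ (i k) ^ s k)⁻¹)
          ≤ ((ρ k ^ q ^ i k * E k : ℝ≥0) : ℝ≥0∞) := by
      intro k
      have h2 : gaussNorm q (PowerSeries.C (R := F) (u k ^ q ^ i k) * (LL q θ (i k) ^ s k)⁻¹)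
          ≤ ((‖u k‖₊ ^ q ^ i k : ℝ≥0) : ℝ≥0∞)
            * ((((q : ℝ≥0) ^ (∑ m ∈ Finset.range (i k), q ^ (m + 1)))⁻¹ : ℝ≥0) : ℝ≥0∞) ^ s k := by
        refine (gaussNorm_mul_le q _ _).trans (mul_le_mul' ?_ ?_)
        · refine (gaussNorm_C_le q _).trans ?_
          rw [nnnorm_pow]
        · exact gaussNorm_LL_pow_inv_le q hq2 θ hθn (i k) (s k)
      refine h2.trans ?_
      rw [← ENNReal.coe_pow, ← ENNReal.coe_mul, ENNReal.coe_le_coe]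
      refine le_of_eq ?_
      have hQA : ((q : ℝ≥0) ^ (∑ m ∈ Finset.range (i k), q ^ (m + 1))) ≠ 0 := by
        apply pow_ne_zero
        exact_mod_cast hq0.ne'
      calc ‖u k‖₊ ^ q ^ i k
            * (((q : ℝ≥0) ^ (∑ m ∈ Finset.range (i k), q ^ (m + 1)))⁻¹) ^ s k
          = ρ k ^ q ^ i k * (E k ^ q ^ i k
              * (((q : ℝ≥0) ^ (∑ m ∈ Finset.range (i k), q ^ (m + 1))) ^ s k)⁻¹) := by
            rw [hu k, mul_pow, inv_pow]
            ring
        _ = ρ k ^ q ^ i k * E k := by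
            congr 1
            rw [hE, key_exponent hq2 (s k) (i k)]
            rw [mul_inv_cancel_right₀ (pow_ne_zero _ hQA)]
    calc gaussNorm q (polyLogTerm q θ s u i)
        ≤ ∏ k, gaussNorm q (PowerSeries.C (R := F) (u k ^ q ^ i k) * (LL q θ (i k) ^ s k)⁻¹) :=
          gaussNorm_prod_le q _ _
      _ ≤ ∏ k, ((ρ k ^ q ^ i k * E k : ℝ≥0) : ℝ≥0∞) := Finset.prod_le_prod' fun k _ => hfac k
      _ = ((B i : ℝ≥0) : ℝ≥0∞) := by rw [hB, ENNReal.coe_finset_prod]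
  -- the bound in terms of the first index only
  have L2 : ∀ i : Fin r → ℕ, B i ≤ ρ k0 ^ q ^ i k0 * P := by
    intro i
    show (∏ k, ρ k ^ q ^ i k * E k) ≤ ρ k0 ^ q ^ i k0 * ∏ k, E k
    rw [Finset.prod_mul_distrib]
    have : ∏ k, ρ k ^ q ^ i k ≤ ρ k0 ^ q ^ i k0 := by
      rw [Finset.prod_eq_mul_prod_sdiff_singleton_of_mem (Finset.mem_univ k0)
        (fun k => ρ k ^ q ^ i k)]
      calc ρ k0 ^ q ^ i k0 * ∏ k ∈ Finset.univ \ {k0}, ρ k ^ q ^ i k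
          ≤ ρ k0 ^ q ^ i k0 * 1 := by
            gcongr
            refine Finset.prod_le_one (fun _ _ => zero_le) fun k hkk => ?_
            have : k ≠ k0 := by
              simpa using (Finset.mem_sdiff.mp hkk).2
            exact pow_le_one₀ (zero_le) (hρk k this)
        _ = ρ k0 ^ q ^ i k0 := mul_one _
    exact mul_le_mul' this le_rfl
  -- the central finiteness statement
  have L3 : ∀ ε : ℝ≥0, 0 < ε →
      {i : {i : Fin r → ℕ // Antitone i} | ε ≤ ρ k0 ^ q ^ i.1 k0 * P}.Finite := by
    intro ε hε
    have htend : Tendsto (fun n : ℕ => ρ k0 ^ n * P) atTop (𝓝 0) := by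
      have := (NNReal.tendsto_pow_atTop_nhds_zero_of_lt_one hρ0).mul_const P
      simpa using this
    obtain ⟨N, hN⟩ := (htend.eventually_lt_const hε).exists_forall_of_atTop
    have hsub : {i : {i : Fin r → ℕ // Antitone i} | ε ≤ ρ k0 ^ q ^ i.1 k0 * P}
        ⊆ {i : {i : Fin r → ℕ // Antitone i} | ∀ k, i.1 k ≤ N} := by
      intro i hi
      simp only [Set.mem_setOf_eq] at hi ⊢
      have hik0 : i.1 k0 ≤ N := by
        by_contra hcon
        push_neg at hcon
        have h3 : ρ k0 ^ q ^ i.1 k0 * P ≤ ρ k0 ^ i.1 k0 * P := by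
          gcongr ?_ * P
          exact pow_le_pow_of_le_one (zero_le) hρ0.le
            (Nat.le_of_lt (Nat.lt_pow_self (by omega)))
        have h4 := hN (i.1 k0) hcon.le
        exact absurd h4 (not_lt.mpr (hi.trans h3))
      intro k
      refine le_trans ?_ hik0
      exact i.2 (by simp [hk0, Fin.le_def])
    refine Set.Finite.subset ?_ hsub
    have : {i : {i : Fin r → ℕ // Antitone i} | ∀ k, i.1 k ≤ N}
        = Subtype.val ⁻¹' (Set.pi Set.univ fun _ : Fin r => Set.Iic N) := by
      ext i
      simp [Set.mem_pi, Pi.le_def]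
    rw [this]
    exact (Set.Finite.pi fun _ => Set.finite_Iic N).preimage
      (Set.injOn_of_injective Subtype.val_injective)
  -- the finiteness statement for the Gauss norms
  have L4 : ∀ ε : ℝ≥0, 0 < ε →
      {i : {i : Fin r → ℕ // Antitone i} |
        (ε : ℝ≥0∞) ≤ gaussNorm q (polyLogTerm q θ s u i.1)}.Finite := by
    intro ε hε
    refine (L3 ε hε).subset fun i hi => ?_
    simp only [Set.mem_setOf_eq] at hi ⊢
    have h5 : (ε : ℝ≥0∞) ≤ ((B i.1 : ℝ≥0) : ℝ≥0∞) := hi.trans (L1 i.1)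
    have h6 : ε ≤ B i.1 := by exact_mod_cast h5
    exact h6.trans (L2 i.1)
  refine ⟨?_, ?_, ?_⟩
  · intro i
    exact ne_top_of_le_ne_top ENNReal.coe_ne_top (L1 i.1)
  · intro ε hε
    have : {i : {i : Fin r → ℕ // Antitone i} |
        ENNReal.ofReal ε ≤ gaussNorm q (polyLogTerm q θ s u i.1)}
        ⊆ {i : {i : Fin r → ℕ // Antitone i} |
        ((ε.toNNReal : ℝ≥0) : ℝ≥0∞) ≤ gaussNorm q (polyLogTerm q θ s u i.1)} := by
      intro i hi
      exact hi
    exact (L4 ε.toNNReal (Real.toNNReal_pos.mpr hε)).subset this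
  · -- summability
    set T : {i : Fin r → ℕ // Antitone i} → PowerSeries F :=
      fun i => polyLogTerm q θ s u i.1 with hT
    have hcoord : ∀ n : ℕ,
        Summable (fun i : {i : Fin r → ℕ // Antitone i} => PowerSeries.coeff (R := F) n (T i)) := by
      intro n
      apply NonarchimedeanAddGroup.summable_of_tendsto_cofinite_zero
      rw [NormedAddCommGroup.tendsto_nhds_zero]
      intro ε hε
      rw [Filter.eventually_cofinite]
      have hclaim : {i : {i : Fin r → ℕ // Antitone i} |
          ¬ ‖PowerSeries.coeff (R := F) n (T i)‖ < ε}
          ⊆ {i : {i : Fin r → ℕ // Antitone i} |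
            ((ε.toNNReal : ℝ≥0) : ℝ≥0∞) ≤ gaussNorm q (polyLogTerm q θ s u i.1)} := by
        intro i hi
        simp only [Set.mem_setOf_eq, not_lt] at hi ⊢
        have h7 : (ε.toNNReal : ℝ≥0∞) ≤ (‖PowerSeries.coeff (R := F) n (T i)‖₊ : ℝ≥0∞) := by
          rw [ENNReal.coe_le_coe, Real.toNNReal_le_iff_le_coe, coe_nnnorm]
          exact hi
        refine h7.trans ?_
        have h8 : (1 : ℝ≥0∞) ≤ (q : ℝ≥0∞) ^ n := by
          refine one_le_pow_of_one_le' ?_ n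
          exact_mod_cast (by omega : 1 ≤ q)
        refine le_trans ?_ (coeff_le_gaussNorm q (T i) n)
        exact le_mul_of_one_le_right (zero_le) h8
      exact (L4 ε.toNNReal (Real.toNNReal_pos.mpr hε)).subset hclaim
    set S : PowerSeries F := PowerSeries.mk fun n => ∑' i, PowerSeries.coeff (R := F) n (T i) with hS
    refine ⟨S, ?_⟩
    have hnhds : (𝓝 S : Filter (PowerSeries F))
        = Filter.comap (fun φ (n : ℕ) => PowerSeries.coeff (R := F) n φ)
            (𝓝 fun n => PowerSeries.coeff (R := F) n S) :=
      nhds_induced _ S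
    unfold HasSum
    rw [hnhds, tendsto_comap_iff]
    have heq : ((fun φ (n : ℕ) => PowerSeries.coeff (R := F) n φ)
          ∘ fun A : Finset {i : Fin r → ℕ // Antitone i} => ∑ i ∈ A, T i)
        = fun A : Finset {i : Fin r → ℕ // Antitone i} =>
            ∑ i ∈ A, fun n => PowerSeries.coeff (R := F) n (T i) := by
      funext A
      funext n
      simp [map_sum]
    rw [heq]
    exact Pi.hasSum.mpr fun n => by
      simpa [hS] using (hcoord n).hasSum
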